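/- Define V_k(β) = ∫_{[0,1]^k} e(β t_1^d ⋯ t_k^d) dt, where e(α) = exp(2πiα) and d ≥ 1 is a fixed integer. Then for every k ≥ 1 there is a constant C = C(k,d) such that for all real β with |β| ≥ 1, one has |V_k(β)| ≤ C |β|^{-1/d} (1 + log|β|)^{k-1}. -/

import Mathlib

open MeasureTheory intervalIntegral

noncomputable def eTwoPi (x : ℝ) : ℂ := Complex.exp (2 * Real.pi * Complex.I * x)

lemma eTwoPi_continuous : Continuous eTwoPi := by
  unfold eTwoPi; fun_prop

lemma eTwoPi_norm (x : ℝ) : ‖eTwoPi x‖ = 1 := by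
  rw [eTwoPi, Complex.norm_exp]
  norm_num [mul_comm, mul_assoc, Complex.mul_I_re]

section base
variable (d : ℕ) (β : ℝ)

-- derivative of the phase
lemma hasDerivAt_v (m : ℕ) (t : ℝ) :
    HasDerivAt (fun t : ℝ => eTwoPi (β * t ^ (m+1)))
      (2 * Real.pi * Complex.I * β * (m+1) * (t:ℂ) ^ m * eTwoPi (β * t ^ (m+1))) t := by
  have h1 : HasDerivAt (fun t : ℝ => β * t ^ (m+1)) (β * ((m+1) * t ^ m)) t := by
    simpa using (hasDerivAt_pow (m+1) t).const_mul β
  have h2 := ((h1.ofReal_comp).const_mul (2 * (Real.pi:ℂ) * Complex.I)).cexp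
  have he : ∀ s : ℝ, Complex.exp (2 * (Real.pi:ℂ) * Complex.I * ((β * s ^ (m+1) : ℝ) : ℂ))
      = eTwoPi (β * s ^ (m+1)) := by
    intro s; rw [eTwoPi]
  simp only [he] at h2
  convert h2 using 1
  push_cast
  ring

lemma hasDerivAt_u (m : ℕ) (c : ℂ) (t : ℝ) (ht : t ≠ 0) :
    HasDerivAt (fun t : ℝ => c * (t:ℂ) ^ (-(m:ℤ)))
      (c * (-(m:ℤ)) * (t:ℂ) ^ (-(m:ℤ) - 1)) t := by
  have := ((hasDerivAt_zpow (-(m:ℤ)) ((t:ℝ):ℂ)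
    (Or.inl (by exact_mod_cast ht))).const_mul c).comp_ofReal
  convert this using 1
  push_cast
  ring

end base


noncomputable def Vd (d k : ℕ) (β : ℝ) : ℂ :=
  ∫ t : Fin k → ℝ in Set.Icc 0 1, eTwoPi (β * ∏ i, (t i) ^ d)

lemma V_cont_aux (d k : ℕ) : Continuous fun p : ℝ × (Fin k → ℝ) => eTwoPi (p.1 * ∏ i, (p.2 i) ^ d) := by
  apply eTwoPi_continuous.comp; fun_prop

lemma V_norm_le_one (d k : ℕ) (β : ℝ) : ‖Vd d k β‖ ≤ 1 := by
  have h := norm_setIntegral_le_of_norm_le_const (μ := volume) (s := Set.Icc (0 : Fin k → ℝ) 1)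
    (f := fun t => eTwoPi (β * ∏ i, (t i) ^ d)) (C := 1) ?_ ?_
  · calc ‖Vd d k β‖ ≤ 1 * (volume (Set.Icc (0 : Fin k → ℝ) 1)).toReal := h
    _ = 1 := by rw [Real.volume_Icc_pi]; simp
  · rw [Real.volume_Icc_pi]; simp [ENNReal.prod_lt_top]
  · intro t _; rw [eTwoPi_norm]

lemma V_continuous (d k : ℕ) : Continuous (Vd d k) := by
  apply continuous_of_dominated (bound := fun _ => (1:ℝ))
  · intro β
    exact (((V_cont_aux d k).comp (Continuous.prodMk_right β)).aestronglyMeasurable)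
  · intro β
    filter_upwards with t using le_of_eq (eTwoPi_norm _)
  · rw [integrable_const_iff]
    right
    constructor
    rw [Measure.restrict_apply_univ, Real.volume_Icc_pi]
    simp [ENNReal.prod_lt_top]
  · filter_upwards with t
    exact eTwoPi_continuous.comp (continuous_mul_right _)

lemma cons_mem_Icc {k : ℕ} (a : ℝ) (y : Fin k → ℝ) :
    (Fin.cons a y ∈ Set.Icc (0 : Fin (k+1) → ℝ) 1) ↔ a ∈ Set.Icc (0:ℝ) 1 ∧ y ∈ Set.Icc (0 : Fin k → ℝ) 1 := by
  simp only [Set.mem_Icc, Pi.le_def, Fin.forall_fin_succ, Fin.cons_zero, Fin.cons_succ]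
  constructor
  · rintro ⟨⟨h1, h2⟩, ⟨h3, h4⟩⟩
    exact ⟨⟨h1, h3⟩, fun i => h2 i, fun i => h4 i⟩
  · rintro ⟨⟨h1, h3⟩, ⟨h2, h4⟩⟩
    exact ⟨⟨h1, fun i => h2 i⟩, ⟨h3, fun i => h4 i⟩⟩

lemma V_succ (d k : ℕ) (β : ℝ) :
    Vd d (k+1) β = ∫ x in (0:ℝ)..1, Vd d k (β * x ^ d) := by
  have hvp := (measurePreserving_piFinSuccAbove (fun _ : Fin (k+1) => (volume : Measure ℝ)) 0).symm
  set e := MeasurableEquiv.piFinSuccAbove (fun _ : Fin (k+1) => ℝ) 0 with he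
  have hsymm : ∀ (p : ℝ × (Fin k → ℝ)), e.symm p = Fin.cons p.1 p.2 := by
    intro p
    simp [he, MeasurableEquiv.piFinSuccAbove_symm_apply, Fin.insertNthEquiv, Fin.insertNth_zero]
  have hpre : e.symm ⁻¹' (Set.Icc (0 : Fin (k+1) → ℝ) 1) =
      (Set.Icc (0:ℝ) 1) ×ˢ (Set.Icc (0 : Fin k → ℝ) 1) := by
    ext p
    rw [Set.mem_preimage, hsymm p, cons_mem_Icc, Set.mem_prod]
  have step1 : Vd d (k+1) β =
      ∫ p in (Set.Icc (0:ℝ) 1) ×ˢ (Set.Icc (0 : Fin k → ℝ) 1),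
        eTwoPi ((β * p.1 ^ d) * ∏ i, (p.2 i) ^ d) := by
    rw [Vd, show (volume : Measure (Fin (k+1) → ℝ)) = Measure.pi fun _ => volume from volume_pi,
      ← hvp.setIntegral_preimage_emb e.symm.measurableEmbedding, hpre]
    rw [show (Measure.pi fun _ : Fin k => (volume : Measure ℝ)) = volume from volume_pi.symm]
    congr 1
    ext p
    rw [hsymm p, Fin.prod_univ_succ]
    simp only [Fin.cons_zero, Fin.cons_succ]
    ring_nf
  have hcont : Continuous fun p : ℝ × (Fin k → ℝ) => eTwoPi ((β * p.1 ^ d) * ∏ i, (p.2 i) ^ d) := by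
    apply eTwoPi_continuous.comp; fun_prop
  rw [step1, Measure.volume_eq_prod, setIntegral_prod _
    (hcont.continuousOn.integrableOn_compact (isCompact_Icc.prod isCompact_Icc))]
  rw [MeasureTheory.integral_Icc_eq_integral_Ioc, ← intervalIntegral.integral_of_le zero_le_one]
  rfl

lemma V_zero (d : ℕ) (γ : ℝ) : Vd d 0 γ = eTwoPi γ := by
  rw [Vd]
  simp only [Finset.univ_eq_empty, Finset.prod_empty, mul_one]
  rw [setIntegral_const, measureReal_def, Real.volume_Icc_pi]
  simp

lemma V_one (d : ℕ) (β : ℝ) : Vd d 1 β = ∫ x in (0:ℝ)..1, eTwoPi (β * x ^ d) := by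
  rw [V_succ]
  exact intervalIntegral.integral_congr fun x _ => V_zero d _

lemma key_part2 (m : ℕ) (β δ : ℝ) (hβ : β ≠ 0) (hδ : 0 < δ) (hδ1 : δ ≤ 1) :
    ‖∫ x in δ..1, eTwoPi (β * x ^ (m+1))‖ ≤
      3 * ((2 * Real.pi * |β| * (m+1))⁻¹ * (δ ^ m)⁻¹) := by
  have hπ := Real.pi_pos
  set K : ℂ := 2 * Real.pi * Complex.I * β * (m+1) with hKdef
  have hm1 : ((m:ℂ) + 1) ≠ 0 := Nat.cast_add_one_ne_zero m
  have hK : K ≠ 0 := by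
    simp [hKdef, Real.pi_ne_zero, Complex.I_ne_zero, hβ, hm1]
  set c : ℂ := K⁻¹ with hcdef
  set u : ℝ → ℂ := fun t => c * (t:ℂ) ^ (-(m:ℤ)) with hu_def
  set u' : ℝ → ℂ := fun t => c * (-(m:ℤ)) * (t:ℂ) ^ (-(m:ℤ) - 1) with hu'_def
  set v : ℝ → ℂ := fun t => eTwoPi (β * t ^ (m+1)) with hv_def
  set v' : ℝ → ℂ := fun t => K * (t:ℂ) ^ m * eTwoPi (β * t ^ (m+1)) with hv'_def
  have huIcc : Set.uIcc δ 1 = Set.Icc δ 1 := Set.uIcc_of_le hδ1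
  have hpos : ∀ t ∈ Set.uIcc δ 1, 0 < t := by
    rw [huIcc]; intro t ht; exact lt_of_lt_of_le hδ ht.1
  have hu : ∀ t ∈ Set.uIcc δ 1, HasDerivAt u (u' t) t := fun t ht =>
    hasDerivAt_u m c t (hpos t ht).ne'
  have hv : ∀ t ∈ Set.uIcc δ 1, HasDerivAt v (v' t) t := fun t _ => by
    simpa [hv_def, hv'_def, hKdef, mul_assoc, mul_comm, mul_left_comm] using hasDerivAt_v β m t
  have hu'int : IntervalIntegrable u' volume δ 1 := by
    apply ContinuousOn.intervalIntegrable
    apply continuousOn_of_forall_continuousAt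
    intro t ht
    have ht0 : (t:ℂ) ≠ 0 := by exact_mod_cast (hpos t ht).ne'
    exact continuousAt_const.mul
      ((continuousAt_zpow₀ _ _ (Or.inl ht0)).comp Complex.continuous_ofReal.continuousAt)
  have hv'int : IntervalIntegrable v' volume δ 1 := by
    apply Continuous.intervalIntegrable
    exact (continuous_const.mul (Complex.continuous_ofReal.pow m)).mul
      (eTwoPi_continuous.comp (by fun_prop))
  have heq : Set.EqOn (fun x : ℝ => eTwoPi (β * x ^ (m+1))) (fun x => u x * v' x)
      (Set.uIcc δ 1) := by
    intro t ht
    have ht0 : (t:ℂ) ≠ 0 := by exact_mod_cast (hpos t ht).ne'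
    have h1 : ((t:ℂ)) ^ (-(m:ℤ)) * ((t:ℂ)) ^ (m:ℤ) = 1 := by
      rw [← zpow_add₀ ht0]; simp
    simp only [hu_def, hv'_def]
    calc eTwoPi (β * t ^ (m+1)) = ((K⁻¹ * K) * (((t:ℂ)) ^ (-(m:ℤ)) * ((t:ℂ)) ^ (m:ℤ))) *
        eTwoPi (β * t ^ (m+1)) := by rw [inv_mul_cancel₀ hK, h1]; ring
      _ = c * (t:ℂ) ^ (-(m:ℤ)) * (K * (t:ℂ) ^ m * eTwoPi (β * t ^ (m+1))) := by
        rw [← hcdef, zpow_natCast]; ring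
  have hibp := intervalIntegral.integral_mul_deriv_eq_deriv_mul hu hv hu'int hv'int
  rw [intervalIntegral.integral_congr heq, hibp]
  -- norms
  have hnormv : ∀ t : ℝ, ‖v t‖ = 1 := fun t => eTwoPi_norm _
  have hnormu : ∀ t : ℝ, 0 < t → ‖u t‖ = ‖c‖ * (t ^ m)⁻¹ := by
    intro t ht
    rw [hu_def]
    rw [norm_mul, norm_zpow, Complex.norm_real, Real.norm_eq_abs, abs_of_pos ht, zpow_neg, zpow_natCast]
  have hnormc : ‖c‖ = (2 * Real.pi * |β| * (m+1))⁻¹ := by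
    rw [hcdef, norm_inv, hKdef]
    congr 1
    have h1 : ((m:ℂ) + 1) = ((m+1:ℕ):ℂ) := by push_cast; ring
    rw [h1]
    simp only [norm_mul, Complex.norm_real, Real.norm_eq_abs, Complex.norm_I,
      Complex.norm_two, Complex.norm_natCast]
    rw [abs_of_pos hπ]
    push_cast; ring
  have hδm : (0:ℝ) < δ ^ m := pow_pos hδ m
  have hone_le : (1:ℝ) ≤ (δ ^ m)⁻¹ := by
    rw [← inv_one]
    gcongr
    exact pow_le_one₀ hδ.le hδ1
  have hcnonneg : 0 ≤ ‖c‖ := norm_nonneg _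
  -- the three pieces
  have hb1 : ‖u 1 * v 1‖ ≤ ‖c‖ * (δ ^ m)⁻¹ := by
    rw [norm_mul, hnormv, hnormu 1 one_pos, mul_one, one_pow, inv_one, mul_one]
    exact le_mul_of_one_le_right hcnonneg hone_le
  have hb2 : ‖u δ * v δ‖ ≤ ‖c‖ * (δ ^ m)⁻¹ := by
    rw [norm_mul, hnormv, hnormu δ hδ, mul_one]
  have hb3 : ‖∫ x in δ..1, u' x * v x‖ ≤ ‖c‖ * (δ ^ m)⁻¹ := by
    rcases Nat.eq_zero_or_pos m with hm0 | hmpos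
    · have hz : ∀ x : ℝ, u' x = 0 := by intro x; simp [hu'_def, hm0]
      simp only [hz, zero_mul, intervalIntegral.integral_zero, norm_zero]
      positivity
    · have hnorm_le := intervalIntegral.norm_integral_le_integral_norm
        (f := fun x => u' x * v x) (a := δ) (b := 1) (μ := volume) hδ1
      have heqn : Set.EqOn (fun x : ℝ => ‖u' x * v x‖)
          (fun x => (‖c‖ * m) * x ^ (-(m:ℤ) - 1)) (Set.uIcc δ 1) := by
        intro t ht
        have ht0 : 0 < t := hpos t ht
        have h1 : ‖((t:ℂ)) ^ (-(m:ℤ) - 1)‖ = t ^ (-(m:ℤ) - 1) := by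
          rw [norm_zpow, Complex.norm_real, Real.norm_eq_abs, abs_of_pos ht0]
        have h2 : ‖(-((m:ℤ):ℂ))‖ = (m:ℝ) := by
          rw [norm_neg]
          push_cast
          exact Complex.norm_natCast m
        simp only [hu'_def, norm_mul, hnormv, mul_one, h1, h2]
      rw [intervalIntegral.integral_congr heqn, intervalIntegral.integral_const_mul,
        integral_zpow (Or.inr ⟨by omega, by rw [huIcc]; intro h; exact absurd h.1 (by linarith)⟩)]
        at hnorm_le
      have hmne : (m:ℝ) ≠ 0 := Nat.cast_ne_zero.2 hmpos.ne'
      have hcalc : (‖c‖ * m) * (((1:ℝ) ^ (-(m:ℤ) - 1 + 1) - δ ^ (-(m:ℤ) - 1 + 1)) / (((-(m:ℤ) - 1 : ℤ) : ℝ) + 1)) ≤ ‖c‖ * (δ ^ m)⁻¹ := by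
        have he1 : (-(m:ℤ) - 1 + 1) = -(m:ℤ) := by ring
        have h3 : (((-(m:ℤ) - 1 : ℤ) : ℝ) + 1) = -(m:ℝ) := by push_cast; ring
        rw [he1, one_zpow, zpow_neg, zpow_natCast, h3]
        have hmpos' : (0:ℝ) < m := by exact_mod_cast hmpos
        have heq2 : ‖c‖ * (m:ℝ) * ((1 - (δ ^ m)⁻¹) / -(m:ℝ)) = ‖c‖ * ((δ ^ m)⁻¹ - 1) := by
          field_simp
          ring
        rw [heq2]
        nlinarith [hcnonneg, hone_le]
      calc ‖∫ x in δ..1, u' x * v x‖ ≤ _ := hnorm_le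
        _ ≤ ‖c‖ * (δ ^ m)⁻¹ := hcalc
  calc ‖u 1 * v 1 - u δ * v δ - ∫ x in δ..1, u' x * v x‖
      ≤ ‖u 1 * v 1 - u δ * v δ‖ + ‖∫ x in δ..1, u' x * v x‖ := norm_sub_le _ _
    _ ≤ (‖u 1 * v 1‖ + ‖u δ * v δ‖) + ‖∫ x in δ..1, u' x * v x‖ := by
        gcongr; exact norm_sub_le _ _
    _ ≤ (‖c‖ * (δ ^ m)⁻¹ + ‖c‖ * (δ ^ m)⁻¹) + ‖c‖ * (δ ^ m)⁻¹ := by gcongr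
    _ = 3 * ((2 * Real.pi * |β| * (m+1))⁻¹ * (δ ^ m)⁻¹) := by rw [hnormc]; ring

lemma V_one_bound (d : ℕ) (hd : 1 ≤ d) (β : ℝ) (hβ : 1 ≤ |β|) :
    ‖∫ x in (0:ℝ)..1, eTwoPi (β * x ^ d)‖ ≤ 2 * |β| ^ (-(1:ℝ)/(d:ℝ)) := by
  obtain ⟨m, rfl⟩ : ∃ m, d = m + 1 := ⟨d - 1, by omega⟩
  have hβ0 : (0:ℝ) < |β| := lt_of_lt_of_le one_pos hβ
  have hβne : β ≠ 0 := by
    intro h; rw [h, abs_zero] at hβ0; exact lt_irrefl _ hβ0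
  set δ := |β| ^ (-(1:ℝ)/((m+1:ℕ):ℝ)) with hδdef
  have hδpos : 0 < δ := Real.rpow_pos_of_pos hβ0 _
  have hδ1 : δ ≤ 1 := by
    apply Real.rpow_le_one_of_one_le_of_nonpos hβ
    apply div_nonpos_of_nonpos_of_nonneg
    · norm_num
    · positivity
  have hδd : δ ^ (m+1) = |β|⁻¹ := by
    rw [hδdef, ← Real.rpow_natCast (|β| ^ (-(1:ℝ)/((m+1:ℕ):ℝ))) (m+1), ← Real.rpow_mul hβ0.le]
    rw [show (-(1:ℝ)/((m+1:ℕ):ℝ)) * ((m+1:ℕ):ℝ) = -1 by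
      field_simp]
    exact Real.rpow_neg_one _
  have hcont : Continuous fun x : ℝ => eTwoPi (β * x ^ (m+1)) :=
    eTwoPi_continuous.comp (by fun_prop)
  have hsplit : (∫ x in (0:ℝ)..1, eTwoPi (β * x ^ (m+1)))
      = (∫ x in (0:ℝ)..δ, eTwoPi (β * x ^ (m+1))) + ∫ x in δ..1, eTwoPi (β * x ^ (m+1)) :=
    (intervalIntegral.integral_add_adjacent_intervals
      (hcont.intervalIntegrable 0 δ) (hcont.intervalIntegrable δ 1)).symm
  have h1 : ‖∫ x in (0:ℝ)..δ, eTwoPi (β * x ^ (m+1))‖ ≤ δ := by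
    have := intervalIntegral.norm_integral_le_of_norm_le_const (C := 1)
      (f := fun x : ℝ => eTwoPi (β * x ^ (m+1))) (a := 0) (b := δ)
      (fun x _ => le_of_eq (eTwoPi_norm _))
    rwa [sub_zero, one_mul, abs_of_pos hδpos] at this
  have h2 := key_part2 m β δ hβne hδpos hδ1
  have hδm : (0:ℝ) < δ ^ m := pow_pos hδpos m
  have hπ := Real.pi_gt_three
  have hkey : 3 * ((2 * Real.pi * |β| * (m+1))⁻¹ * (δ ^ m)⁻¹) ≤ δ := by
    have hβval : |β| = (δ ^ (m+1))⁻¹ := by rw [hδd, inv_inv]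
    rw [hβval, pow_succ]
    have hmr : (0:ℝ) ≤ (m:ℝ) := Nat.cast_nonneg m
    rw [show (2 * Real.pi * (δ ^ m * δ)⁻¹ * (↑m + 1))⁻¹ * (δ ^ m)⁻¹
        = δ / (2 * Real.pi * (↑m + 1)) by
      field_simp]
    have h6 : (6:ℝ) ≤ 2 * Real.pi * ((m:ℝ)+1) := by nlinarith [hmr]
    calc 3 * (δ / (2 * Real.pi * ((m:ℝ)+1))) ≤ 3 * (δ / 6) := by gcongr
      _ ≤ δ := by linarith [hδpos.le]
  calc ‖∫ x in (0:ℝ)..1, eTwoPi (β * x ^ (m+1))‖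
      ≤ δ + 3 * ((2 * Real.pi * |β| * (m+1))⁻¹ * (δ ^ m)⁻¹) := by
        rw [hsplit]; exact le_trans (norm_add_le _ _) (by gcongr)
    _ ≤ δ + δ := by linarith
    _ = 2 * |β| ^ (-(1:ℝ)/((m+1:ℕ):ℝ)) := by rw [hδdef]; ring

lemma rpow_delta_pow (d : ℕ) (hd : 1 ≤ d) (b : ℝ) (hb : 0 < b) :
    (b ^ (-(1:ℝ)/(d:ℝ))) ^ d = b⁻¹ := by
  have hdne : (d:ℝ) ≠ 0 := by positivity
  rw [← Real.rpow_natCast (b ^ (-(1:ℝ)/(d:ℝ))) d, ← Real.rpow_mul hb.le]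
  rw [show (-(1:ℝ)/(d:ℝ)) * (d:ℝ) = -1 by field_simp]
  exact Real.rpow_neg_one _

lemma main_bound (d : ℕ) (hd : 1 ≤ d) (n : ℕ) :
    ∃ C : ℝ, 0 ≤ C ∧ ∀ β : ℝ, 1 ≤ |β| →
      ‖Vd d (n+1) β‖ ≤ C * |β| ^ (-(1:ℝ)/(d:ℝ)) * (1 + Real.log |β|) ^ n := by
  induction n with
  | zero =>
    refine ⟨2, by norm_num, fun β hβ => ?_⟩
    rw [pow_zero, mul_one, V_one]
    exact V_one_bound d hd β hβ
  | succ n IH =>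
    obtain ⟨C, hC0, hC⟩ := IH
    refine ⟨1 + C, by positivity, fun β hβ => ?_⟩
    have hβ0 : (0:ℝ) < |β| := lt_of_lt_of_le one_pos hβ
    have hd0 : (0:ℝ) < d := by exact_mod_cast hd
    set L := Real.log |β| with hL
    have hL0 : 0 ≤ L := Real.log_nonneg hβ
    set δ := |β| ^ (-(1:ℝ)/(d:ℝ)) with hδdef
    have hδpos : 0 < δ := Real.rpow_pos_of_pos hβ0 _
    have hδ1 : δ ≤ 1 := by
      apply Real.rpow_le_one_of_one_le_of_nonpos hβ
      apply div_nonpos_of_nonpos_of_nonneg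
      · norm_num
      · positivity
    have hδd : δ ^ d = |β|⁻¹ := rpow_delta_pow d hd |β| hβ0
    have hVc : Continuous fun t : ℝ => Vd d (n+1) (β * t ^ d) :=
      (V_continuous d (n+1)).comp (by fun_prop)
    rw [V_succ, ← intervalIntegral.integral_add_adjacent_intervals
      (hVc.intervalIntegrable 0 δ) (hVc.intervalIntegrable δ 1)]
    have h1 : ‖∫ x in (0:ℝ)..δ, Vd d (n+1) (β * x ^ d)‖ ≤ δ := by
      have := intervalIntegral.norm_integral_le_of_norm_le_const (C := 1)
        (f := fun x : ℝ => Vd d (n+1) (β * x ^ d)) (a := 0) (b := δ)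
        (fun x _ => V_norm_le_one d (n+1) _)
      rwa [sub_zero, one_mul, abs_of_pos hδpos] at this
    set A := C * |β| ^ (-(1:ℝ)/(d:ℝ)) * (1 + L) ^ n with hA
    have hA0 : 0 ≤ A := by
      rw [hA]; positivity
    have h2 : ‖∫ x in δ..1, Vd d (n+1) (β * x ^ d)‖ ≤ A * (L / d) := by
      have hbound : ∀ t ∈ Set.uIoc δ 1, ‖Vd d (n+1) (β * t ^ d)‖ ≤ A * t⁻¹ := by
        intro t ht
        rw [Set.uIoc_of_le hδ1] at ht
        have ht0 : 0 < t := lt_of_lt_of_le hδpos ht.1.le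
        have ht1 : t ≤ 1 := ht.2
        have harg : 1 ≤ |β * t ^ d| := by
          rw [abs_mul, abs_pow, abs_of_pos ht0]
          calc (1:ℝ) = |β| * |β|⁻¹ := (mul_inv_cancel₀ hβ0.ne').symm
            _ = |β| * δ ^ d := by rw [hδd]
            _ ≤ |β| * t ^ d := by gcongr; exact ht.1.le
        have hmain := hC (β * t ^ d) harg
        have e1 : |β * t ^ d| ^ (-(1:ℝ)/(d:ℝ)) = |β| ^ (-(1:ℝ)/(d:ℝ)) * t⁻¹ := by
          rw [abs_mul, abs_pow, abs_of_pos ht0,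
            Real.mul_rpow (abs_nonneg β) (by positivity)]
          congr 1
          rw [← Real.rpow_natCast t d, ← Real.rpow_mul ht0.le]
          rw [show (d:ℝ) * (-(1:ℝ)/(d:ℝ)) = -1 by field_simp]
          exact Real.rpow_neg_one t
        have e2 : (1 + Real.log |β * t ^ d|) ^ n ≤ (1 + L) ^ n := by
          apply pow_le_pow_left₀
          · linarith [Real.log_nonneg harg]
          · have hlog : Real.log |β * t ^ d| ≤ L := by
              rw [abs_mul, abs_pow, abs_of_pos ht0,
                Real.log_mul hβ0.ne' (by positivity), hL]
              have : Real.log (t ^ d) ≤ 0 :=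
                Real.log_nonpos (by positivity) (pow_le_one₀ ht0.le ht1)
              linarith
            linarith
        calc ‖Vd d (n+1) (β * t ^ d)‖
            ≤ C * |β * t ^ d| ^ (-(1:ℝ)/(d:ℝ)) * (1 + Real.log |β * t ^ d|) ^ n := hmain
          _ = C * (|β| ^ (-(1:ℝ)/(d:ℝ)) * t⁻¹) * (1 + Real.log |β * t ^ d|) ^ n := by rw [e1]
          _ ≤ C * (|β| ^ (-(1:ℝ)/(d:ℝ)) * t⁻¹) * (1 + L) ^ n := by
              have : (0:ℝ) ≤ C * (|β| ^ (-(1:ℝ)/(d:ℝ)) * t⁻¹) := by positivity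
              exact mul_le_mul_of_nonneg_left e2 this
          _ = A * t⁻¹ := by rw [hA]; ring
      have hgint : IntervalIntegrable (fun t : ℝ => A * t⁻¹) volume δ 1 := by
        apply ContinuousOn.intervalIntegrable
        apply continuousOn_const.mul
        apply ContinuousOn.inv₀ continuousOn_id
        intro t ht
        rw [Set.uIcc_of_le hδ1] at ht
        exact (lt_of_lt_of_le hδpos ht.1).ne'
      have hle := intervalIntegral.norm_integral_le_abs_of_norm_le
        ((ae_restrict_mem measurableSet_uIoc).mono fun t ht => hbound t ht) hgint
      have hint : ∫ t in δ..1, A * t⁻¹ = A * (L / d) := by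
        rw [intervalIntegral.integral_const_mul, integral_inv_of_pos hδpos one_pos]
        congr 1
        rw [one_div, Real.log_inv, hδdef, Real.log_rpow hβ0, ← hL]
        ring
      rw [hint] at hle
      calc ‖∫ x in δ..1, Vd d (n+1) (β * x ^ d)‖ ≤ |A * (L / d)| := hle
        _ = A * (L / d) := abs_of_nonneg (by positivity)
    have hLd : A * (L / d) ≤ C * |β| ^ (-(1:ℝ)/(d:ℝ)) * (1 + L) ^ (n+1) := by
      have hLdL : L / d ≤ 1 + L := by
        have : L / d ≤ L := div_le_self hL0 (by exact_mod_cast hd)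
        linarith
      calc A * (L / d) ≤ A * (1 + L) := by
            exact mul_le_mul_of_nonneg_left hLdL hA0
        _ = C * |β| ^ (-(1:ℝ)/(d:ℝ)) * (1 + L) ^ (n+1) := by rw [hA]; ring
    have hδle : δ ≤ |β| ^ (-(1:ℝ)/(d:ℝ)) * (1 + L) ^ (n+1) := by
      rw [hδdef]
      exact le_mul_of_one_le_right (Real.rpow_nonneg hβ0.le _)
        (one_le_pow₀ (by linarith))
    calc ‖(∫ x in (0:ℝ)..δ, Vd d (n+1) (β * x ^ d)) + ∫ x in δ..1, Vd d (n+1) (β * x ^ d)‖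
        ≤ ‖∫ x in (0:ℝ)..δ, Vd d (n+1) (β * x ^ d)‖ + ‖∫ x in δ..1, Vd d (n+1) (β * x ^ d)‖ :=
          norm_add_le _ _
      _ ≤ δ + A * (L / d) := add_le_add h1 h2
      _ ≤ |β| ^ (-(1:ℝ)/(d:ℝ)) * (1 + L) ^ (n+1) + C * |β| ^ (-(1:ℝ)/(d:ℝ)) * (1 + L) ^ (n+1) := by
          linarith
      _ = (1 + C) * |β| ^ (-(1:ℝ)/(d:ℝ)) * (1 + L) ^ (n+1) := by ring

/-- With `V_k(β) = ∫_{[0,1]^k} e(β t₁^d⋯t_k^d) dt`, for every `k ≥ 1` there is `C` with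
`|V_k(β)| ≤ C |β|^{-1/d} (1+log|β|)^{k-1}` for all `|β| ≥ 1`. -/
theorem stmt_4 (d : ℕ) (hd : 1 ≤ d) (k : ℕ) (hk : 1 ≤ k) :
    ∃ C : ℝ, ∀ β : ℝ, 1 ≤ |β| →
      ‖∫ t : Fin k → ℝ in Set.Icc 0 1, eTwoPi (β * ∏ i, (t i) ^ d)‖ ≤
        C * |β| ^ (-(1 : ℝ) / d) * (1 + Real.log |β|) ^ (k - 1) := by
  obtain ⟨n, rfl⟩ : ∃ n, k = n + 1 := ⟨k - 1, by omega⟩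
  obtain ⟨C, hC0, hC⟩ := main_bound d hd n
  refine ⟨C, fun β hβ => ?_⟩
  have := hC β hβ
  rw [Vd] at this
  simpa using this
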